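/- arXiv:2504.00598 — 3 statements merged into one kernel-verified Lean document; each statement's English description precedes it below -/
import Mathlib

section
/- Let n ≥ 1, let S be a finite type of parallelism strategies, and let w : Fin n → ℝ be nonnegative edge weights satisfying the refinement property w (n−1) ≤ w i for all i < n. Fix boundary strategies σ₀, σₙ ∈ S. Among all assignments s : Fin (n+1) → S with s 0 = σ₀ and s n = σₙ, the assignment defined by s i = σ₀ for 0 ≤ i ≤ n−1 and s n = σₙ attains the minimum of cost(s) = Σ_{i=0}^{n−1} w i · (if s i ≠ s (i+1) then 1 else 0); moreover this minimum equals w (n−1) if σ₀ ≠ σₙ and equals 0 if σ₀ = σₙ. (This is the paper's Theorem 1: enforcing consistent parallel dimensions throughout a ParallelBlock does not exclude the globally optimal parallelism plan.) -/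
/-- **Theorem 1 of the paper** (ParallelBlock optimality).
A ParallelBlock with its neighboring operators is a chain of nodes `0, 1, …, n`
with edges `(i, i+1)` carrying nonnegative resharding weights `w i`, where the
refinement property guarantees that the output edge `n-1` is the cheapest:
`w (n-1) ≤ w i`.  Among all assignments `s : Fin (n+1) → S` of parallelism
strategies with boundary conditions `s 0 = σ₀` and `s n = σₙ`, the assignment
that keeps `σ₀` throughout the block and switches (if at all) only on the last
edge attains the minimum communication cost
`cost(s) = ∑ i, w i * (if s i ≠ s (i+1) then 1 else 0)`, and this minimum is
`w (n-1)` when `σ₀ ≠ σₙ` and `0` when `σ₀ = σₙ`. -/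
theorem parallelBlock_consistent_strategy_optimal
    {n : ℕ} (hn : 1 ≤ n) {S : Type*} [Fintype S] [DecidableEq S]
    (w : Fin n → ℝ) (hw : ∀ i, 0 ≤ w i)
    (hrefine : ∀ i : Fin n, w ⟨n - 1, by omega⟩ ≤ w i)
    (σ₀ σₙ : S) :
    let cost : (Fin (n + 1) → S) → ℝ :=
      fun s => ∑ i : Fin n, w i * (if s i.castSucc ≠ s i.succ then 1 else 0)
    let sopt : Fin (n + 1) → S := fun j => if j = Fin.last n then σₙ else σ₀
    sopt 0 = σ₀ ∧ sopt (Fin.last n) = σₙ ∧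
      (∀ s : Fin (n + 1) → S, s 0 = σ₀ → s (Fin.last n) = σₙ →
        cost sopt ≤ cost s) ∧
      cost sopt = (if σ₀ ≠ σₙ then w ⟨n - 1, by omega⟩ else 0) := by
  intro cost sopt
  have hlast : (0 : Fin (n+1)) ≠ Fin.last n := by
    intro h
    have := congrArg Fin.val h
    simp [Fin.last] at this
    omega
  have h0 : sopt 0 = σ₀ := by simp [sopt, hlast]
  have hL : sopt (Fin.last n) = σₙ := by simp [sopt]
  -- cost of sopt
  have hcast_ne : ∀ i : Fin n, i.castSucc ≠ Fin.last n := fun i => Fin.castSucc_lt_last i |>.ne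
  have hsucc_eq : ∀ i : Fin n, (i.succ = Fin.last n ↔ i = ⟨n-1, by omega⟩) := by
    intro i
    constructor
    · intro h; have := congrArg Fin.val h; simp [Fin.last] at this
      exact Fin.ext (by simp; omega)
    · intro h; subst h; apply Fin.ext; simp [Fin.last]; omega
  have hcost_sopt : cost sopt = (if σ₀ ≠ σₙ then w ⟨n - 1, by omega⟩ else 0) := by
    have : cost sopt = ∑ i : Fin n,
        (if i = ⟨n-1, by omega⟩ then w i * (if σ₀ ≠ σₙ then 1 else 0) else 0) := by
      apply Finset.sum_congr rfl
      intro i _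
      by_cases hi : i = ⟨n-1, by omega⟩
      · subst hi
        simp only [sopt, if_neg (hcast_ne _), if_pos ((hsucc_eq _).2 rfl), if_pos rfl]
        simp
      · have hs : i.succ ≠ Fin.last n := fun h => hi ((hsucc_eq i).1 h)
        simp [sopt, hcast_ne i, hs, hi]
    rw [this, Finset.sum_ite_eq' Finset.univ (⟨n-1, by omega⟩ : Fin n)]
    simp only [Finset.mem_univ, if_pos]
    by_cases h : σ₀ = σₙ <;> simp [h]
  refine ⟨h0, hL, ?_, hcost_sopt⟩
  intro s hs0 hsL
  rw [hcost_sopt]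
  by_cases h : σ₀ = σₙ
  · simp only [h, ne_eq, not_true_eq_false, if_false]
    apply Finset.sum_nonneg
    intro i _
    by_cases hi : s i.castSucc ≠ s i.succ <;> simp [hi, hw i]
  · simp only [ne_eq, h, not_false_eq_true, if_true]
    -- there exists an edge where s changes
    by_cases hall : ∀ i : Fin n, s i.castSucc = s i.succ
    · exfalso
      have hconst : ∀ j : Fin (n+1), s j = s 0 := by
        intro j
        induction j using Fin.induction with
        | zero => rfl
        | succ i ih => rw [← hall i]; exact ih
      exact h (by rw [← hs0, ← hsL]; exact (hconst (Fin.last n)).symm)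
    · push_neg at hall
      obtain ⟨i, hi⟩ := hall
      calc w ⟨n-1, by omega⟩ ≤ w i := hrefine i
        _ = w i * (if s i.castSucc ≠ s i.succ then 1 else 0) := by simp [hi]
        _ ≤ _ := Finset.single_le_sum (f := fun i => w i * (if s i.castSucc ≠ s i.succ then 1 else 0))
            (fun j _ => by by_cases hj : s j.castSucc ≠ s j.succ <;> simp [hj, hw j])
            (Finset.mem_univ i)
end

section
/- Let A, B₁, B₂, C be positive natural numbers and B = B₁ · B₂. Consider the subgraph consisting of: a reshape splitting the column dimension of an [A, B] tensor into (B₁, B₂); a batched matrix multiplication contracting the B₁ dimension (producing shape [B₂, A, C]); a second batched matrix multiplication contracting the C dimension (producing shape [A, B₁, B₂]); and a reshape merging (B₁, B₂) back into B, with element-level dependency maps: split (a, b₁, b₂) ↦ {(a, B₂·b₁ + b₂)}; first BMM (b₂, a, c) ↦ {(a, b₁′, b₂) : b₁′ ∈ Fin B₁}; second BMM (a, b₁, b₂) ↦ {(b₂, a, c) : c ∈ Fin C}; merge (a, b) ↦ {(a, ⌊b/B₂⌋, b mod B₂)}. Then the composed dependency set of the subgraph output element (a, b) ∈ Fin A ×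 Fin B on the subgraph input elements equals {(a, b′) : b′ ∈ Fin B, b′ mod B₂ = b mod B₂}. In particular, every input element that output element (a, b) depends on has the same row index a and the same column index modulo B₂, so the subgraph is parallelism-preserving when the input is partitioned along the row dimension or along the B₂ sub-dimension of the column. -/
section ReshapeBMMChain

variable (A B₁ B₂ C : ℕ)

/-- Element-level dependency of the reshape splitting the column dimension of
an `[A, B₁·B₂]` tensor into `(B₁, B₂)`: output element `(a, b₁, b₂)` depends
on the single input element `(a, B₂·b₁ + b₂)`. -/
def splitDep : Fin A × Fin B₁ × Fin B₂ → Set (Fin A × Fin (B₁ * B₂)) :=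
  fun x =>
    {(x.1, ⟨B₂ * (x.2.1 : ℕ) + (x.2.2 : ℕ), by
      have h1 := x.2.1.isLt
      have h2 := x.2.2.isLt
      calc B₂ * (x.2.1 : ℕ) + (x.2.2 : ℕ) < B₂ * ((x.2.1 : ℕ) + 1) := by
            rw [Nat.mul_succ]; omega
        _ ≤ B₂ * B₁ := Nat.mul_le_mul_left _ (by omega)
        _ = B₁ * B₂ := Nat.mul_comm _ _⟩)}

/-- Element-level dependency of the first batched matrix multiplication,
contracting the `B₁` dimension: output element `(b₂, a, c)` of the
`[B₂, A, C]` result depends on the split-tensor elements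
`{(a, b₁′, b₂) : b₁′ ∈ Fin B₁}`. -/
def bmm1Dep : Fin B₂ × Fin A × Fin C → Set (Fin A × Fin B₁ × Fin B₂) :=
  fun x => {y | y.1 = x.2.1 ∧ y.2.2 = x.1}

/-- Element-level dependency of the second batched matrix multiplication,
contracting the `C` dimension: output element `(a, b₁, b₂)` of the
`[A, B₁, B₂]` result depends on the elements `{(b₂, a, c) : c ∈ Fin C}`. -/
def bmm2Dep : Fin A × Fin B₁ × Fin B₂ → Set (Fin B₂ × Fin A × Fin C) :=
  fun x => {p | p.1 = x.2.2 ∧ p.2.1 = x.1}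

/-- Element-level dependency of the reshape merging `(B₁, B₂)` back into the
column dimension `B₁·B₂`: output element `(a, b)` depends on the single
element `(a, ⌊b/B₂⌋, b mod B₂)`. -/
def mergeDep (h2 : 0 < B₂) : Fin A × Fin (B₁ * B₂) → Set (Fin A × Fin B₁ × Fin B₂) :=
  fun x =>
    {(x.1, ⟨(x.2 : ℕ) / B₂, (Nat.div_lt_iff_lt_mul h2).mpr x.2.isLt⟩,
      ⟨(x.2 : ℕ) % B₂, Nat.mod_lt _ h2⟩)}

/-- The composed element-level dependency of the whole subgraph
(split reshape, then two batched matrix multiplications, then merge reshape). -/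
def subgraphDep (h2 : 0 < B₂) : Fin A × Fin (B₁ * B₂) → Set (Fin A × Fin (B₁ * B₂)) :=
  fun x => ⋃ p ∈ mergeDep A B₁ B₂ h2 x, ⋃ q ∈ bmm2Dep A B₁ B₂ C p,
    ⋃ s ∈ bmm1Dep A B₁ B₂ C q, splitDep A B₁ B₂ s

end ReshapeBMMChain

/-- The composed dependency set of the subgraph output element `(a, b)` on the
subgraph input elements equals `{(a, b′) : b′ mod B₂ = b mod B₂}`: every input
element that `(a, b)` depends on has the same row index `a` and the same
column index modulo `B₂`.  Hence the subgraph (split reshape; BMM contracting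
`B₁`; BMM contracting `C`; merge reshape) is parallelism-preserving when the
input is partitioned along the row dimension or along the `B₂` sub-dimension
of the column. -/
theorem subgraphDep_eq_row_and_mod
    (A B₁ B₂ C : ℕ) (hA : 0 < A) (h1 : 0 < B₁) (h2 : 0 < B₂) (hC : 0 < C)
    (x : Fin A × Fin (B₁ * B₂)) :
    subgraphDep A B₁ B₂ C h2 x =
      {y : Fin A × Fin (B₁ * B₂) | y.1 = x.1 ∧ (y.2 : ℕ) % B₂ = (x.2 : ℕ) % B₂} := by
  ext y
  simp only [subgraphDep, mergeDep, bmm2Dep, bmm1Dep, splitDep, Set.mem_iUnion,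
    Set.mem_setOf_eq, Set.mem_singleton_iff]
  constructor
  · rintro ⟨p, hp, q, ⟨hq1, hq2⟩, s, ⟨hs1, hs2⟩, hy⟩
    subst hp hy
    refine ⟨by rw [hs1, hq2], ?_⟩
    have : (s.2.2 : ℕ) = (x.2 : ℕ) % B₂ := by rw [hs2, hq1]
    simp [this, Nat.mul_add_mod]
  · rintro ⟨h1', h2'⟩
    refine ⟨_, rfl, ⟨⟨(y.2 : ℕ) % B₂, Nat.mod_lt _ h2⟩, x.1, ⟨0, hC⟩⟩, ⟨?_, rfl⟩,
      ⟨x.1, ⟨(y.2 : ℕ) / B₂, (Nat.div_lt_iff_lt_mul h2).mpr y.2.isLt⟩,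
        ⟨(y.2 : ℕ) % B₂, Nat.mod_lt _ h2⟩⟩, ⟨rfl, rfl⟩, ?_⟩
    · exact Fin.ext h2'
    · obtain ⟨y1, y2⟩ := y
      simp only at h1' ⊢
      subst h1'
      congr 1
      exact Fin.ext (Nat.div_add_mod _ _).symm
end

section
/- Let Bt, S, H, D be positive natural numbers (batch size, sequence length, number of attention heads, and per-head hidden size). Model the self-attention block by the element-level dependency maps: the attention-score tensor element (b, h, s, s′) ∈ Fin Bt × Fin H × Fin S × Fin S depends on Q-elements {(b, s, h, d) : d ∈ Fin D} and K-elements {(b, s′, h, d) : d ∈ Fin D}; the softmax (applied along the last sequence dimension) element (b, h, s, s′) depends on score elements {(b, h, s, t) : t ∈ Fin S}; the weighted-sum output element (b, s, h, d) depends on softmax elements {(b, h, s, s′) : s′ ∈ Fin S} and V-elements {(b, s′, h, d) : s′ ∈ Fin S}; and the final reshape merging the head dimensions makes Y-element (b, s, e) ∈ Fin Bt × Fin S × Fin (H·D) depend on weighted-sum element (b, s, ⌊e/D⌋, e mod D). Then every element of Q, K, or V on which Y(b, s, e) depends through the composed dependency has batch index equal to b and head index equal to ⌊e/D⌋; i.e.,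 the composed dependency sets into Q, K, and V are contained in {(b, s″, ⌊e/D⌋, d) : s″ ∈ Fin S, d ∈ Fin D}. Hence each block of the output tensor Y depends only on the corresponding blocks of Q, K, and V, and self-attention is a parallelism-preserving subgraph with respect to partitioning the batch and head dimensions. -/
section SelfAttention

variable (Bt S H D : ℕ)

/-- Index space of the tensors `Q`, `K`, `V` and of the weighted-sum output,
all of shape `[Bt, S, H, D]`. -/
abbrev QKVIdx := Fin Bt × Fin S × Fin H × Fin D

/-- Index space of the attention-score (and softmax) tensor of shape
`[Bt, H, S, S]`. -/
abbrev ScoreIdx := Fin Bt × Fin H × Fin S × Fin S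

/-- Score element `(b, h, s, s′)` depends on the `Q`-elements
`{(b, s, h, d) : d ∈ Fin D}`. -/
def scoreDepQ : ScoreIdx Bt S H → Set (QKVIdx Bt S H D) :=
  fun x => {q | q.1 = x.1 ∧ q.2.1 = x.2.2.1 ∧ q.2.2.1 = x.2.1}

/-- Score element `(b, h, s, s′)` depends on the `K`-elements
`{(b, s′, h, d) : d ∈ Fin D}`. -/
def scoreDepK : ScoreIdx Bt S H → Set (QKVIdx Bt S H D) :=
  fun x => {k | k.1 = x.1 ∧ k.2.1 = x.2.2.2 ∧ k.2.2.1 = x.2.1}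

/-- Softmax (along the last sequence dimension) element `(b, h, s, s′)`
depends on the score elements `{(b, h, s, t) : t ∈ Fin S}`. -/
def softmaxDep : ScoreIdx Bt S H → Set (ScoreIdx Bt S H) :=
  fun x => {p | p.1 = x.1 ∧ p.2.1 = x.2.1 ∧ p.2.2.1 = x.2.2.1}

/-- Weighted-sum output element `(b, s, h, d)` depends on the softmax
elements `{(b, h, s, s′) : s′ ∈ Fin S}`. -/
def wsDepSoftmax : QKVIdx Bt S H D → Set (ScoreIdx Bt S H) :=
  fun x => {p | p.1 = x.1 ∧ p.2.1 = x.2.2.1 ∧ p.2.2.1 = x.2.1}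

/-- Weighted-sum output element `(b, s, h, d)` depends on the `V`-elements
`{(b, s′, h, d) : s′ ∈ Fin S}`. -/
def wsDepV : QKVIdx Bt S H D → Set (QKVIdx Bt S H D) :=
  fun x => {v | v.1 = x.1 ∧ v.2.2.1 = x.2.2.1 ∧ v.2.2.2 = x.2.2.2}

/-- The final reshape merging the head dimensions: `Y`-element `(b, s, e)` of
shape `[Bt, S, H·D]` depends on the weighted-sum element
`(b, s, ⌊e/D⌋, e mod D)`. -/
def reshapeDep (hD : 0 < D) : Fin Bt × Fin S × Fin (H * D) → Set (QKVIdx Bt S H D) :=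
  fun y =>
    {(y.1, y.2.1, ⟨(y.2.2 : ℕ) / D, (Nat.div_lt_iff_lt_mul hD).mpr y.2.2.isLt⟩,
      ⟨(y.2.2 : ℕ) % D, Nat.mod_lt _ hD⟩)}

/-- Composed dependency of `Y`-element `(b, s, e)` on the elements of `Q`. -/
def yDepQ (hD : 0 < D) : Fin Bt × Fin S × Fin (H * D) → Set (QKVIdx Bt S H D) :=
  fun y => ⋃ w ∈ reshapeDep Bt S H D hD y, ⋃ p ∈ wsDepSoftmax Bt S H D w,
    ⋃ sc ∈ softmaxDep Bt S H p, scoreDepQ Bt S H D sc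

/-- Composed dependency of `Y`-element `(b, s, e)` on the elements of `K`. -/
def yDepK (hD : 0 < D) : Fin Bt × Fin S × Fin (H * D) → Set (QKVIdx Bt S H D) :=
  fun y => ⋃ w ∈ reshapeDep Bt S H D hD y, ⋃ p ∈ wsDepSoftmax Bt S H D w,
    ⋃ sc ∈ softmaxDep Bt S H p, scoreDepK Bt S H D sc

/-- Composed dependency of `Y`-element `(b, s, e)` on the elements of `V`. -/
def yDepV (hD : 0 < D) : Fin Bt × Fin S × Fin (H * D) → Set (QKVIdx Bt S H D) :=
  fun y => ⋃ w ∈ reshapeDep Bt S H D hD y, wsDepV Bt S H D w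

end SelfAttention

/-- Every element of `Q`, `K`, or `V` on which the self-attention output
element `Y(b, s, e)` depends (through the composed element-level dependency)
has batch index `b` and head index `⌊e/D⌋`; i.e. the composed dependency sets
into `Q`, `K` and `V` are contained in
`{(b, s″, ⌊e/D⌋, d) : s″ ∈ Fin S, d ∈ Fin D}`.  Hence each block of the output
tensor `Y` depends only on the corresponding blocks of `Q`, `K`, and `V`, and
self-attention is a parallelism-preserving subgraph with respect to
partitioning the batch and head dimensions. -/
theorem selfAttention_parallelism_preserving
    (Bt S H D : ℕ) (hBt : 0 < Bt) (hS : 0 < S) (hH : 0 < H) (hD : 0 < D)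
    (y : Fin Bt × Fin S × Fin (H * D)) :
    (yDepQ Bt S H D hD y ⊆
        {q : QKVIdx Bt S H D | q.1 = y.1 ∧ (q.2.2.1 : ℕ) = (y.2.2 : ℕ) / D}) ∧
    (yDepK Bt S H D hD y ⊆
        {k : QKVIdx Bt S H D | k.1 = y.1 ∧ (k.2.2.1 : ℕ) = (y.2.2 : ℕ) / D}) ∧
    (yDepV Bt S H D hD y ⊆
        {v : QKVIdx Bt S H D | v.1 = y.1 ∧ (v.2.2.1 : ℕ) = (y.2.2 : ℕ) / D}) := by
  refine ⟨?_, ?_, ?_⟩ <;>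
  · intro q hq
    simp only [yDepQ, yDepK, yDepV, reshapeDep, wsDepSoftmax, softmaxDep,
      scoreDepQ, scoreDepK, wsDepV, Set.mem_iUnion, Set.mem_setOf_eq,
      Set.mem_singleton_iff] at hq ⊢
    obtain ⟨w, hw, rest⟩ := hq
    subst hw
    simp_all
end
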